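/- Let p be an odd prime. In the polynomial ring F_p[X] one has the identity Σ_{s=1}^{p-1} (-1)^{s-1} s^{-1} (X-1)^s = - Σ_{s=1}^{p-1} s^{-1} X^s, where s^{-1} is the inverse of (the image of) s in F_p. -/

import Mathlib

open Polynomial

private lemma aux_range_eq (p : ℕ) (hp : 2 ≤ p) :
    Finset.range (p + 1) = insert 0 (insert p (Finset.Icc 1 (p - 1))) := by
  ext x
  simp only [Finset.mem_range, Finset.mem_insert, Finset.mem_Icc]
  omega

private lemma aux_sum_choose {R : Type*} [CommRing R] (p : ℕ) (hp : 2 ≤ p) (Y : R) :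
    ∑ s ∈ Finset.Icc 1 (p - 1), (p.choose s : R) * Y ^ s = (Y + 1) ^ p - Y ^ p - 1 := by
  have h := add_pow Y 1 p
  simp only [one_pow, mul_one] at h
  have h1 : (0 : ℕ) ∉ insert p (Finset.Icc 1 (p - 1)) := by
    simp only [Finset.mem_insert, Finset.mem_Icc]; omega
  have h2 : p ∉ Finset.Icc 1 (p - 1) := by
    simp only [Finset.mem_Icc]; omega
  rw [aux_range_eq p hp, Finset.sum_insert h1, Finset.sum_insert h2] at h
  simp only [pow_zero, Nat.choose_zero_right, Nat.cast_one, one_mul, Nat.choose_self] at h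
  have heq : ∑ s ∈ Finset.Icc 1 (p - 1), (p.choose s : R) * Y ^ s
      = ∑ s ∈ Finset.Icc 1 (p - 1), Y ^ s * (p.choose s : R) := by
    apply Finset.sum_congr rfl; intros; ring
  rw [heq]
  linear_combination -h

private lemma aux_choose_cast (p : ℕ) (hp : p.Prime) :
    ∀ k, k < p → ((Nat.choose (p - 1) k : ZMod p)) = (-1) ^ k := by
  intro k
  induction k with
  | zero => simp
  | succ k ih =>
    intro hk
    have hp1 : p - 1 + 1 = p := by have := hp.pos; omega
    have hpascal : (p - 1).choose k + (p - 1).choose (k + 1) = p.choose (k + 1) := by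
      have := Nat.choose_succ_succ (p - 1) k
      simp only [Nat.succ_eq_add_one, hp1] at this
      omega
    have hdvd : p ∣ p.choose (k + 1) := hp.dvd_choose_self (by omega) hk
    have h0 : ((p.choose (k + 1) : ZMod p)) = 0 :=
      (ZMod.natCast_eq_zero_iff _ _).mpr hdvd
    have hik := ih (by omega)
    have hcast : ((p - 1).choose k : ZMod p) + ((p - 1).choose (k + 1) : ZMod p) = 0 := by
      rw [← Nat.cast_add, hpascal, h0]
    rw [hik] at hcast
    rw [pow_succ]
    linear_combination hcast

private lemma aux_keyZ (p : ℕ) (hp : p.Prime) (hodd : Odd p) :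
    ∑ s ∈ Finset.Icc 1 (p - 1),
      ((p.choose s / p : ℕ) : ℤ[X]) * (((X : ℤ[X]) - 1) ^ s - (-X) ^ s) = 0 := by
  have hp2 := hp.two_le
  have hP : (p : ℤ[X]) * ∑ s ∈ Finset.Icc 1 (p - 1),
      ((p.choose s / p : ℕ) : ℤ[X]) * (((X : ℤ[X]) - 1) ^ s - (-X) ^ s) = 0 := by
    rw [Finset.mul_sum]
    have hterm : ∀ s ∈ Finset.Icc 1 (p - 1),
        (p : ℤ[X]) * (((p.choose s / p : ℕ) : ℤ[X]) * (((X : ℤ[X]) - 1) ^ s - (-X) ^ s))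
        = (p.choose s : ℤ[X]) * ((X : ℤ[X]) - 1) ^ s - (p.choose s : ℤ[X]) * (-X) ^ s := by
      intro s hs
      simp only [Finset.mem_Icc] at hs
      have hd : p * (p.choose s / p) = p.choose s :=
        Nat.mul_div_cancel' (hp.dvd_choose_self (by omega) (by omega))
      rw [← mul_assoc, ← Nat.cast_mul, hd]; ring
    rw [Finset.sum_congr rfl hterm, Finset.sum_sub_distrib,
      aux_sum_choose p hp2 ((X : ℤ[X]) - 1), aux_sum_choose p hp2 (-(X : ℤ[X]))]
    have e1 : (-(X : ℤ[X])) ^ p = -X ^ p := hodd.neg_pow X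
    have e2 : (-(X : ℤ[X]) + 1) ^ p = -(((X : ℤ[X]) - 1) ^ p) := by
      rw [show (-(X : ℤ[X]) + 1) = -((X : ℤ[X]) - 1) by ring, hodd.neg_pow]
    rw [show ((X : ℤ[X]) - 1 + 1) = X by ring, e1, e2]; ring
  rcases mul_eq_zero.mp hP with h | h
  · exact absurd h (by exact_mod_cast Nat.cast_ne_zero.mpr (by omega))
  · exact h

private lemma aux_key (p : ℕ) (hp : p.Prime) (hodd : Odd p) :
    ∑ s ∈ Finset.Icc 1 (p - 1),
      ((p.choose s / p : ℕ) : (ZMod p)[X]) * (((X : (ZMod p)[X]) - 1) ^ s - (-X) ^ s) = 0 := by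
  have h := congrArg (Polynomial.map (Int.castRingHom (ZMod p))) (aux_keyZ p hp hodd)
  rw [Polynomial.map_zero, Polynomial.map_sum] at h
  simpa [Polynomial.map_mul, Polynomial.map_sub, Polynomial.map_pow, Polynomial.map_neg,
    Polynomial.map_natCast] using h

private lemma aux_coeff (p : ℕ) (hp : p.Prime) (s : ℕ) (hs1 : 1 ≤ s) (hs2 : s ≤ p - 1) :
    ((p.choose s / p : ℕ) : ZMod p) = (-1 : ZMod p) ^ (s - 1) * (s : ZMod p)⁻¹ := by
  haveI : Fact p.Prime := ⟨hp⟩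
  have hp2 := hp.two_le
  have hd : (p.choose s / p) * p = p.choose s :=
    Nat.div_mul_cancel (hp.dvd_choose_self (by omega) (by omega))
  have hid : p * ((p - 1).choose (s - 1)) = p.choose s * s := by
    have := Nat.add_one_mul_choose_eq (p - 1) (s - 1)
    rw [show p - 1 + 1 = p by omega, show s - 1 + 1 = s by omega] at this
    exact this
  have hmul : (p.choose s / p) * s = (p - 1).choose (s - 1) := by
    have h3 : p * ((p.choose s / p) * s) = p * ((p - 1).choose (s - 1)) := by
      calc p * (p.choose s / p * s) = (p.choose s / p * p) * s := by ring
        _ = p.choose s * s := by rw [hd]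
        _ = p * ((p - 1).choose (s - 1)) := hid.symm
    exact Nat.eq_of_mul_eq_mul_left hp.pos h3
  have hcast : ((p.choose s / p : ℕ) : ZMod p) * (s : ZMod p) = (-1 : ZMod p) ^ (s - 1) := by
    rw [← Nat.cast_mul, hmul, aux_choose_cast p hp (s - 1) (by omega)]
  have hsne : (s : ZMod p) ≠ 0 := by
    rw [Ne, ZMod.natCast_eq_zero_iff]
    intro hdvd
    have := Nat.le_of_dvd (by omega) hdvd
    omega
  rw [eq_mul_inv_iff_mul_eq₀ hsne]
  exact hcast

theorem stmt2 (p : ℕ) (hp : p.Prime) (hodd : Odd p) :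
    ∑ s ∈ Finset.Icc 1 (p - 1),
        ((-1 : ZMod p) ^ (s - 1) * (s : ZMod p)⁻¹) • ((X - 1 : (ZMod p)[X]) ^ s)
      = - ∑ s ∈ Finset.Icc 1 (p - 1), (s : ZMod p)⁻¹ • (X : (ZMod p)[X]) ^ s := by
  have key := aux_key p hp hodd
  have hterm : ∀ s ∈ Finset.Icc 1 (p - 1),
      ((p.choose s / p : ℕ) : (ZMod p)[X]) * (((X : (ZMod p)[X]) - 1) ^ s - (-X) ^ s)
      = ((-1 : ZMod p) ^ (s - 1) * (s : ZMod p)⁻¹) • ((X - 1 : (ZMod p)[X]) ^ s)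
        + (s : ZMod p)⁻¹ • (X : (ZMod p)[X]) ^ s := by
    intro s hs
    simp only [Finset.mem_Icc] at hs
    obtain ⟨t, rfl⟩ : ∃ t, s = t + 1 := ⟨s - 1, by omega⟩
    have hc : ((p.choose (t + 1) / p : ℕ) : ZMod p)
        = (-1 : ZMod p) ^ (t + 1 - 1) * ((t + 1 : ℕ) : ZMod p)⁻¹ :=
      aux_coeff p hp (t + 1) (by omega) (by omega)
    have hnatC : ((p.choose (t + 1) / p : ℕ) : (ZMod p)[X])
        = C ((p.choose (t + 1) / p : ℕ) : ZMod p) := by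
      simp
    rw [hnatC, hc, smul_eq_C_mul, smul_eq_C_mul]
    have hneg : (-(X : (ZMod p)[X])) ^ (t + 1) = C ((-1 : ZMod p) ^ (t + 1)) * X ^ (t + 1) := by
      rw [neg_pow]
      simp [map_pow]
    rw [hneg]
    have hsq : (-1 : ZMod p) ^ t * (-1 : ZMod p) ^ (t + 1) = -1 := by
      rw [show (-1 : ZMod p) ^ t * (-1 : ZMod p) ^ (t + 1) = -((-1 : ZMod p) ^ (t + t)) by
        rw [pow_succ, pow_add]; ring]
      rw [Even.neg_one_pow ⟨t, rfl⟩]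
    have hsqC : C ((-1 : ZMod p) ^ t) * C ((-1 : ZMod p) ^ (t + 1)) = -1 := by
      rw [← map_mul, hsq, map_neg, map_one]
    simp only [Nat.add_sub_cancel, map_mul]
    linear_combination (-(C (((t + 1 : ℕ) : ZMod p)⁻¹)) * X ^ (t + 1)) * hsqC
  rw [Finset.sum_congr rfl hterm, Finset.sum_add_distrib] at key
  linear_combination key
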